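/- The map q̄ : Z₀ → ℝP² is a locally trivial fiber bundle with fiber S²: for every ℓ ∈ ℝP² there exist an open neighborhood U of ℓ and a homeomorphism h : q̄⁻¹(U) ≃ U × S² such that for every z ∈ q̄⁻¹(U) the first coordinate of h(z) equals q̄(z). -/

import Mathlib

noncomputable section

/-- The unit 2-sphere `S²` in Euclidean `ℝ³`. -/
abbrev S2 : Type := Metric.sphere (0 : EuclideanSpace ℝ (Fin 3)) 1

/-- The reflection `r(y₁,y₂,y₃) = (y₁,y₂,−y₃)` of `ℝ³`. -/
def rFun (y : EuclideanSpace ℝ (Fin 3)) : EuclideanSpace ℝ (Fin 3) :=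
  WithLp.toLp 2 (fun i => if i = 2 then -y i else y i)

lemma rFun_norm (y : EuclideanSpace ℝ (Fin 3)) : ‖rFun y‖ = ‖y‖ := by
  simp only [EuclideanSpace.norm_eq]
  congr 1
  refine Finset.sum_congr rfl fun i _ => ?_
  by_cases h : i = 2 <;> simp [rFun, h]

/-- The reflection `r`, restricted to the unit sphere `S²`. -/
def sphereR (x : S2) : S2 :=
  ⟨rFun x.val, by
    rw [mem_sphere_zero_iff_norm, rFun_norm]
    exact mem_sphere_zero_iff_norm.mp x.2⟩

/-- The map `τ : S² × S² → S² × S²`, `τ(x,y) = (r(x), −y)`. -/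
def tau (p : S2 × S2) : S2 × S2 := (sphereR p.1, -p.2)

lemma rFun_rFun (y : EuclideanSpace ℝ (Fin 3)) : rFun (rFun y) = y := by
  refine PiLp.ext fun i => ?_
  by_cases h : i = 2 <;> simp [rFun, h]

lemma tau_tau (p : S2 × S2) : tau (tau p) = p := by
  obtain ⟨x, y⟩ := p
  simp only [tau, neg_neg]
  exact Prod.ext (Subtype.ext (rFun_rFun x.val)) rfl

/-- The equivalence relation on `S² × S²` given by `p ∼ q ↔ (q = p or q = τ(p))`. -/
def tauSetoid : Setoid (S2 × S2) where
  r p q := q = p ∨ q = tau p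
  iseqv := by
    constructor
    · intro p; left; rfl
    · rintro p q (rfl | rfl)
      · left; rfl
      · right; exact (tau_tau p).symm
    · rintro p q r (rfl | rfl) (rfl | rfl)
      · left; rfl
      · right; rfl
      · right; rfl
      · left; exact tau_tau p

/-- The quotient space `Z₀ = (S² × S²)/∼`, with the quotient topology. -/
abbrev Z0 : Type := Quotient tauSetoid

/-- The quotient map `π : S² × S² → Z₀`. -/
def pi0 : S2 × S2 → Z0 := Quotient.mk tauSetoid

/-- The real projective plane `ℝP²`, the projectivization of `ℝ³`. -/
abbrev RP2 : Type := Projectivization ℝ (EuclideanSpace ℝ (Fin 3))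

/-- `ℝP²` carries the quotient topology from the subspace of nonzero vectors of `ℝ³`. -/
instance : TopologicalSpace RP2 :=
  inferInstanceAs (TopologicalSpace
    (Quotient (projectivizationSetoid ℝ (EuclideanSpace ℝ (Fin 3)))))

lemma sphere_ne_zero (y : S2) : (y : EuclideanSpace ℝ (Fin 3)) ≠ 0 := by
  intro h0
  have h := mem_sphere_zero_iff_norm.mp y.2
  rw [h0] at h
  simp at h

/-- The map `q : S² × S² → ℝP²`, `q(x,y) = [y]`. -/
def qFun (p : S2 × S2) : RP2 := Projectivization.mk ℝ p.2.val (sphere_ne_zero p.2)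

lemma qFun_tau (p : S2 × S2) : qFun (tau p) = qFun p := by
  refine (Projectivization.mk_eq_mk_iff ℝ _ _ _ _).mpr ⟨-1, ?_⟩
  show (-1 : ℝˣ) • (p.2.val) = ((tau p).2).val
  simp [tau, Units.smul_def]

/-- The descended map `q̄ : Z₀ → ℝP²`, satisfying `q̄ ∘ π = q`. -/
def qbar : Z0 → RP2 :=
  Quotient.lift qFun (by
    rintro a b (rfl | rfl)
    · rfl
    · exact (qFun_tau a).symm)

namespace QbarBundle

open Projectivization Metric Topology
open scoped RealInnerProductSpace

noncomputable section

abbrev E3 : Type := EuclideanSpace ℝ (Fin 3)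

/-! ### sign function -/

def sgn (t : ℝ) : ℝ := t / |t|

lemma sgn_pos {t : ℝ} (h : 0 < t) : sgn t = 1 := by
  rw [sgn, abs_of_pos h, div_self h.ne']

lemma sgn_neg' {t : ℝ} (h : t < 0) : sgn t = -1 := by
  rw [sgn, abs_of_neg h, div_neg, div_self h.ne]

lemma sgn_ne_zero {t : ℝ} (h : t ≠ 0) : sgn t ≠ 0 :=
  div_ne_zero h (abs_ne_zero.mpr h)

lemma abs_sgn {t : ℝ} (h : t ≠ 0) : |sgn t| = 1 := by
  rcases h.lt_or_gt with h' | h'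
  · rw [sgn_neg' h']; norm_num
  · rw [sgn_pos h']; norm_num

lemma sgn_mul (a t : ℝ) : sgn (a * t) = sgn a * sgn t := by
  rw [sgn, sgn, sgn, abs_mul, div_mul_div_comm]

lemma sgn_sq {a : ℝ} (h : a ≠ 0) : sgn a * sgn a = 1 := by
  rcases h.lt_or_gt with h' | h' <;> simp [sgn_pos, sgn_neg', h']

/-! ### the reflection is continuous -/

def rLin : E3 →ₗ[ℝ] E3 where
  toFun := rFun
  map_add' x y := by
    refine PiLp.ext fun i => ?_
    by_cases h : i = 2 <;> simp [rFun, h, PiLp.add_apply] <;> ring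
  map_smul' c x := by
    refine PiLp.ext fun i => ?_
    by_cases h : i = 2 <;> simp [rFun, h, PiLp.smul_apply, smul_eq_mul] <;> ring

lemma continuous_rFun : Continuous rFun := rLin.continuous_of_finiteDimensional

/-! ### basic objects depending on `v₀` -/

variable (v₀ : E3)

def ip (w : E3) : ℝ := inner ℝ w v₀

lemma ip_smul (a : ℝ) (w : E3) : ip v₀ (a • w) = a * ip v₀ w :=
  real_inner_smul_left _ _ _

lemma ip_neg (w : E3) : ip v₀ (-w) = -ip v₀ w := by
  simpa using ip_smul v₀ (-1) w

lemma continuous_ip : Continuous (ip v₀) :=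
  continuous_id.inner continuous_const

def Uset : Set RP2 := {m | ip v₀ m.rep ≠ 0}

lemma mem_Uset {y : E3} (hy : y ≠ 0) :
    Projectivization.mk ℝ y hy ∈ Uset v₀ ↔ ip v₀ y ≠ 0 := by
  obtain ⟨a, ha⟩ := (mk_eq_mk_iff ℝ _ _ (rep_nonzero _) hy).1
    (mk_rep (Projectivization.mk ℝ y hy))
  show ip v₀ (Projectivization.mk ℝ y hy).rep ≠ 0 ↔ _
  rw [← ha, Units.smul_def, ip_smul, mul_ne_zero_iff]
  exact ⟨fun h => h.2, fun h => ⟨a.ne_zero, h⟩⟩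

lemma isQuotientMap_mk' :
    IsQuotientMap (Projectivization.mk' ℝ : {v : E3 // v ≠ 0} → RP2) :=
  isQuotientMap_quotient_mk'

lemma isOpen_Uset : IsOpen (Uset v₀) := by
  rw [← (isQuotientMap_mk').isOpen_preimage]
  have : (Projectivization.mk' ℝ) ⁻¹' (Uset v₀) = {w : {v : E3 // v ≠ 0} | ip v₀ w.val ≠ 0} :=
    Set.ext fun w => mem_Uset v₀ w.prop
  rw [this]
  exact (isOpen_compl_singleton).preimage ((continuous_ip v₀).comp continuous_subtype_val)

/-! ### the fiber coordinate map -/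

def Efun (p : S2 × S2) : E3 :=
  ((1 + sgn (ip v₀ p.2.val)) / 2) • (p.1.val : E3) +
    ((1 - sgn (ip v₀ p.2.val)) / 2) • rFun p.1.val

lemma Efun_pos {p : S2 × S2} (h : 0 < ip v₀ p.2.val) : Efun v₀ p = p.1.val := by
  rw [Efun, sgn_pos h]; norm_num

lemma Efun_neg {p : S2 × S2} (h : ip v₀ p.2.val < 0) : Efun v₀ p = rFun p.1.val := by
  rw [Efun, sgn_neg' h]; norm_num

def basePt : S2 := ⟨EuclideanSpace.single 0 1, by
  rw [mem_sphere_zero_iff_norm, EuclideanSpace.norm_single]; norm_num⟩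

lemma Efun_mem {p : S2 × S2} (h : ip v₀ p.2.val ≠ 0) :
    Efun v₀ p ∈ Metric.sphere (0 : E3) 1 := by
  rw [mem_sphere_zero_iff_norm]
  rcases h.lt_or_gt with hn | hp
  · rw [Efun_neg v₀ hn, rFun_norm]; exact mem_sphere_zero_iff_norm.mp p.1.2
  · rw [Efun_pos v₀ hp]; exact mem_sphere_zero_iff_norm.mp p.1.2

def Esph (p : S2 × S2) : S2 :=
  if h : ip v₀ p.2.val ≠ 0 then ⟨Efun v₀ p, Efun_mem v₀ h⟩ else basePt

lemma Esph_val {p : S2 × S2} (h : ip v₀ p.2.val ≠ 0) :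
    (Esph v₀ p).val = Efun v₀ p := by rw [Esph, dif_pos h]

lemma ip_tau (p : S2 × S2) : ip v₀ ((tau p).2).val = -(ip v₀ p.2.val) := by
  show ip v₀ ((-p.2 : S2) : E3) = _
  rw [coe_neg_sphere, ip_neg]

lemma Esph_tau (p : S2 × S2) : Esph v₀ (tau p) = Esph v₀ p := by
  by_cases h : ip v₀ p.2.val ≠ 0
  · have h' : ip v₀ ((tau p).2).val ≠ 0 := by
      rw [ip_tau]; exact neg_ne_zero.mpr h
    apply Subtype.ext
    rw [Esph_val _ h', Esph_val _ h]
    rcases h.lt_or_gt with hn | hp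
    · rw [Efun_neg v₀ hn, Efun_pos v₀ (by rw [ip_tau]; linarith)]
      rfl
    · rw [Efun_pos v₀ hp, Efun_neg v₀ (by rw [ip_tau]; linarith)]
      exact rFun_rFun _
  · have h' : ¬ ip v₀ ((tau p).2).val ≠ 0 := by
      rw [ip_tau]; push_neg at h ⊢; rw [h, neg_zero]
    rw [Esph, dif_neg h', Esph, dif_neg h]

def EZ : Z0 → S2 :=
  Quotient.lift (Esph v₀) (by
    rintro a b (rfl | rfl)
    · rfl
    · exact (Esph_tau v₀ a).symm)

/-! ### the section -/

def sVec (w : E3) : E3 := sgn (ip v₀ w) • (‖w‖⁻¹ • w)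

lemma sVec_norm {w : E3} (hw : w ≠ 0) (hc : ip v₀ w ≠ 0) : ‖sVec v₀ w‖ = 1 := by
  rw [sVec, norm_smul, norm_smul, norm_inv, norm_norm, Real.norm_eq_abs, abs_sgn hc,
    one_mul, inv_mul_cancel₀ (norm_ne_zero_iff.mpr hw)]

lemma sVec_smul {w : E3} {a : ℝ} (ha : a ≠ 0) (hw : w ≠ 0) :
    sVec v₀ (a • w) = sVec v₀ w := by
  rw [sVec, sVec, ip_smul, sgn_mul, norm_smul, smul_smul, smul_smul, smul_smul]
  congr 1
  rw [Real.norm_eq_abs]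
  have hn : ‖w‖ ≠ 0 := norm_ne_zero_iff.mpr hw
  rcases ha.lt_or_gt with h | h
  · rw [sgn_neg' h, abs_of_neg h]
    field_simp
  · rw [sgn_pos h, abs_of_pos h]
    field_simp

lemma sVec_ne_zero {w : E3} (hw : w ≠ 0) (hc : ip v₀ w ≠ 0) : sVec v₀ w ≠ 0 := by
  intro h0
  have := sVec_norm v₀ hw hc
  rw [h0, norm_zero] at this
  norm_num at this

lemma mk_sVec {w : E3} (hw : w ≠ 0) (hc : ip v₀ w ≠ 0) (h1 : sVec v₀ w ≠ 0) :
    Projectivization.mk ℝ (sVec v₀ w) h1 = Projectivization.mk ℝ w hw := by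
  rw [mk_eq_mk_iff]
  refine ⟨Units.mk0 (sgn (ip v₀ w) * ‖w‖⁻¹)
    (mul_ne_zero (sgn_ne_zero hc) (inv_ne_zero (norm_ne_zero_iff.mpr hw))), ?_⟩
  show (sgn (ip v₀ w) * ‖w‖⁻¹) • w = sVec v₀ w
  rw [sVec, smul_smul]

lemma ip_sVec_pos {w : E3} (hw : w ≠ 0) (hc : ip v₀ w ≠ 0) : 0 < ip v₀ (sVec v₀ w) := by
  rw [sVec, ip_smul, ip_smul]
  have : sgn (ip v₀ w) * (‖w‖⁻¹ * ip v₀ w) =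
      (ip v₀ w * ip v₀ w / |ip v₀ w|) * ‖w‖⁻¹ := by rw [sgn]; ring
  rw [this]
  exact mul_pos (div_pos (mul_self_pos.mpr hc) (abs_pos.mpr hc))
    (inv_pos.mpr (norm_pos_iff.mpr hw))

lemma sVec_unit {y : S2} : sVec v₀ y.val = sgn (ip v₀ y.val) • (y.val : E3) := by
  rw [sVec, mem_sphere_zero_iff_norm.mp y.2, inv_one, one_smul]

def sSec : ↥(Uset v₀) → S2 := fun m =>
  ⟨sVec v₀ m.val.rep,
    mem_sphere_zero_iff_norm.mpr (sVec_norm v₀ m.val.rep_nonzero m.prop)⟩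

lemma sSec_eq {m : ↥(Uset v₀)} {y : E3} (hy : y ≠ 0)
    (hmk : Projectivization.mk ℝ y hy = m.val) : (sSec v₀ m).val = sVec v₀ y := by
  show sVec v₀ m.val.rep = sVec v₀ y
  obtain ⟨a, ha⟩ := (mk_eq_mk_iff ℝ _ _ (rep_nonzero _) hy).1
    (by rw [hmk]; exact mk_rep m.val)
  rw [← ha, Units.smul_def, sVec_smul v₀ a.ne_zero hy]

/-! ### sets and maps -/

def Dset : Set Z0 := qbar ⁻¹' Uset v₀

lemma qFun_sSec (m : ↥(Uset v₀)) (x : S2) : qFun (x, sSec v₀ m) = m.val := by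
  show Projectivization.mk ℝ (sVec v₀ m.val.rep) _ = m.val
  exact (mk_sVec v₀ m.val.rep_nonzero m.prop _).trans (mk_rep _)

def hFwd : ↥(Dset v₀) → ↥(Uset v₀) × S2 := fun z =>
  (⟨qbar z.val, z.prop⟩, EZ v₀ z.val)

def gInv : ↥(Uset v₀) × S2 → ↥(Dset v₀) := fun mx =>
  ⟨pi0 (mx.2, sSec v₀ mx.1), by
    show qFun (mx.2, sSec v₀ mx.1) ∈ Uset v₀
    rw [qFun_sSec]; exact mx.1.prop⟩

lemma isQuotientMap_pi0 : IsQuotientMap pi0 :=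
  isQuotientMap_quotient_mk'

lemma continuous_qbar : Continuous qbar := by
  rw [(isQuotientMap_pi0).continuous_iff]
  show Continuous fun p : S2 × S2 => Projectivization.mk' ℝ ⟨p.2.val, sphere_ne_zero p.2⟩
  exact (isQuotientMap_mk').continuous.comp
    ((continuous_subtype_val.comp continuous_snd).subtype_mk _)

lemma isOpen_Dset : IsOpen (Dset v₀) := (isOpen_Uset v₀).preimage (continuous_qbar)

lemma mem_preimage_pi0 {p : S2 × S2} (hp : p ∈ pi0 ⁻¹' (Dset v₀)) :
    ip v₀ p.2.val ≠ 0 := by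
  have : qFun p ∈ Uset v₀ := hp
  rw [show qFun p = Projectivization.mk ℝ p.2.val (sphere_ne_zero p.2) from rfl,
    mem_Uset] at this
  exact this

lemma continuous_qFun : Continuous qFun := by
  show Continuous fun p : S2 × S2 => Projectivization.mk' ℝ ⟨p.2.val, sphere_ne_zero p.2⟩
  exact (isQuotientMap_mk').continuous.comp
    ((continuous_subtype_val.comp continuous_snd).subtype_mk _)

lemma continuous_pi0 : Continuous pi0 := (isQuotientMap_pi0).continuous

lemma continuous_hFwd : Continuous (hFwd v₀) := by
  have hres : IsQuotientMap ((Dset v₀).restrictPreimage pi0) :=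
    (isQuotientMap_pi0).restrictPreimage_isOpen (isOpen_Dset v₀)
  rw [hres.continuous_iff]
  have hip : Continuous fun p : ↑(pi0 ⁻¹' (Dset v₀)) => ip v₀ p.val.2.val :=
    (continuous_ip v₀).comp
      (continuous_subtype_val.comp (continuous_snd.comp continuous_subtype_val))
  have hipne : ∀ p : ↑(pi0 ⁻¹' (Dset v₀)), |ip v₀ p.val.2.val| ≠ 0 :=
    fun p => abs_ne_zero.mpr (mem_preimage_pi0 v₀ p.prop)
  have hsgn : Continuous fun p : ↑(pi0 ⁻¹' (Dset v₀)) => sgn (ip v₀ p.val.2.val) :=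
    hip.div (continuous_abs.comp hip) hipne
  have hx : Continuous fun p : ↑(pi0 ⁻¹' (Dset v₀)) => (p.val.1.val : E3) :=
    continuous_subtype_val.comp (continuous_fst.comp continuous_subtype_val)
  have hE : Continuous fun p : ↑(pi0 ⁻¹' (Dset v₀)) => Efun v₀ p.val :=
    ((((continuous_const.add hsgn).div_const 2).smul hx).add
      (((continuous_const.sub hsgn).div_const 2).smul (continuous_rFun.comp hx)))
  have key : ∀ p : ↑(pi0 ⁻¹' (Dset v₀)),
      (hFwd v₀ ∘ (Dset v₀).restrictPreimage pi0) p =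
        (⟨qFun p.val, p.prop⟩, ⟨Efun v₀ p.val, Efun_mem v₀ (mem_preimage_pi0 v₀ p.prop)⟩) := by
    intro p
    refine Prod.ext rfl ?_
    show EZ v₀ (pi0 p.val) = _
    exact Subtype.ext (Esph_val v₀ (mem_preimage_pi0 v₀ p.prop))
  refine Continuous.congr ?_ (fun p => (key p).symm)
  exact Continuous.prodMk
    (((continuous_qFun).comp continuous_subtype_val).subtype_mk _)
    (hE.subtype_mk _)

lemma continuous_sSec : Continuous (sSec v₀) := by
  have hres : IsQuotientMap ((Uset v₀).restrictPreimage (Projectivization.mk' ℝ)) :=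
    (isQuotientMap_mk').restrictPreimage_isOpen (isOpen_Uset v₀)
  rw [hres.continuous_iff]
  have hipne : ∀ w : ↑((Projectivization.mk' ℝ : {v : E3 // v ≠ 0} → RP2) ⁻¹' (Uset v₀)),
      ip v₀ w.val.val ≠ 0 := fun w => (mem_Uset v₀ w.val.prop).1 w.prop
  have key : ∀ w : ↑((Projectivization.mk' ℝ : {v : E3 // v ≠ 0} → RP2) ⁻¹' (Uset v₀)),
      (sSec v₀ ∘ (Uset v₀).restrictPreimage (Projectivization.mk' ℝ)) w =
        ⟨sVec v₀ w.val.val, mem_sphere_zero_iff_norm.mpr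
          (sVec_norm v₀ w.val.prop (hipne w))⟩ := by
    intro w
    exact Subtype.ext (sSec_eq v₀ w.val.prop rfl)
  refine Continuous.congr ?_ (fun w => (key w).symm)
  have hip : Continuous fun w : ↑((Projectivization.mk' ℝ : {v : E3 // v ≠ 0} → RP2) ⁻¹' (Uset v₀)) =>
      ip v₀ w.val.val :=
    (continuous_ip v₀).comp (continuous_subtype_val.comp continuous_subtype_val)
  have hsgn : Continuous fun w : ↑((Projectivization.mk' ℝ : {v : E3 // v ≠ 0} → RP2) ⁻¹' (Uset v₀)) =>
      sgn (ip v₀ w.val.val) :=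
    hip.div (continuous_abs.comp hip) (fun w => abs_ne_zero.mpr (hipne w))
  have hw : Continuous fun w : ↑((Projectivization.mk' ℝ : {v : E3 // v ≠ 0} → RP2) ⁻¹' (Uset v₀)) =>
      (w.val.val : E3) :=
    continuous_subtype_val.comp continuous_subtype_val
  have hnrm : Continuous fun w : ↑((Projectivization.mk' ℝ : {v : E3 // v ≠ 0} → RP2) ⁻¹' (Uset v₀)) =>
      ‖(w.val.val : E3)‖⁻¹ :=
    (hw.norm).inv₀ (fun w => norm_ne_zero_iff.mpr w.val.prop)
  exact (hsgn.smul (hnrm.smul hw)).subtype_mk _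

lemma continuous_gInv : Continuous (gInv v₀) := by
  refine Continuous.subtype_mk ?_ _
  exact (continuous_pi0).comp
    (continuous_snd.prodMk ((continuous_sSec v₀).comp continuous_fst))

lemma left_inv : Function.LeftInverse (gInv v₀) (hFwd v₀) := by
  rintro ⟨z, hz⟩
  obtain ⟨⟨x, y⟩, rfl⟩ := Quotient.exists_rep z
  apply Subtype.ext
  show pi0 (EZ v₀ (pi0 (x, y)), sSec v₀ ⟨qbar (pi0 (x, y)), hz⟩) = pi0 (x, y)
  have hc : ip v₀ y.val ≠ 0 := mem_preimage_pi0 v₀ hz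
  have hs : (sSec v₀ ⟨qbar (pi0 (x, y)), hz⟩).val = sgn (ip v₀ y.val) • (y.val : E3) := by
    rw [sSec_eq v₀ (sphere_ne_zero y) rfl, sVec_unit]
  have hE : EZ v₀ (pi0 (x, y)) = Esph v₀ (x, y) := rfl
  rcases hc.lt_or_gt with hn | hp
  · -- negative sign: the pair is τ (x, y)
    have h1 : EZ v₀ (pi0 (x, y)) = sphereR x := by
      rw [hE]
      exact Subtype.ext (by rw [Esph_val v₀ hc, Efun_neg v₀ hn]; rfl)
    have h2 : sSec v₀ ⟨qbar (pi0 (x, y)), hz⟩ = -y := by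
      apply Subtype.ext
      rw [hs, sgn_neg' hn, coe_neg_sphere]
      exact neg_one_smul ℝ _
    rw [h1, h2]
    exact Quotient.sound (Or.inr (tau_tau (x, y)).symm)
  · -- positive sign: the pair is (x, y) itself
    have h1 : EZ v₀ (pi0 (x, y)) = x := by
      rw [hE]
      exact Subtype.ext (by rw [Esph_val v₀ hc, Efun_pos v₀ hp])
    have h2 : sSec v₀ ⟨qbar (pi0 (x, y)), hz⟩ = y := by
      apply Subtype.ext
      rw [hs, sgn_pos hp, one_smul]
    rw [h1, h2]

set_option maxHeartbeats 1000000 in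
lemma right_inv : Function.RightInverse (gInv v₀) (hFwd v₀) := by
  rintro ⟨m, x⟩
  refine Prod.ext (Subtype.ext ?_) ?_
  · show qbar (pi0 (x, sSec v₀ m)) = m.val
    exact qFun_sSec v₀ m x
  · show EZ v₀ (pi0 (x, sSec v₀ m)) = x
    have hpos : 0 < ip v₀ (sSec v₀ m).val := by
      show 0 < ip v₀ (sVec v₀ m.val.rep)
      exact ip_sVec_pos v₀ m.val.rep_nonzero m.prop
    have hc : ip v₀ (sSec v₀ m).val ≠ 0 := hpos.ne'
    show Esph v₀ (x, sSec v₀ m) = x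
    exact Subtype.ext (by rw [Esph_val v₀ hc, Efun_pos v₀ hpos])

def trivHomeo : ↑(Dset v₀) ≃ₜ ↑(Uset v₀) × S2 where
  toFun := hFwd v₀
  invFun := gInv v₀
  left_inv := left_inv v₀
  right_inv := right_inv v₀
  continuous_toFun := continuous_hFwd v₀
  continuous_invFun := continuous_gInv v₀

end

end QbarBundle

/-- `q̄ : Z₀ → ℝP²` is a locally trivial fiber bundle with fiber `S²`. -/
theorem qbar_is_locally_trivial_sphere_bundle :
    ∀ ℓ : RP2, ∃ U : Set RP2, IsOpen U ∧ ℓ ∈ U ∧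
      ∃ h : ↥(qbar ⁻¹' U) ≃ₜ ↥U × S2,
        ∀ z : ↥(qbar ⁻¹' U), ((h z).1 : RP2) = qbar z.val := by
  intro ℓ
  have hv₀ : ℓ.rep ≠ 0 := ℓ.rep_nonzero
  refine ⟨QbarBundle.Uset ℓ.rep, QbarBundle.isOpen_Uset ℓ.rep, ?_, ?_⟩
  · show QbarBundle.ip ℓ.rep ℓ.rep ≠ 0
    show (inner ℝ ℓ.rep ℓ.rep : ℝ) ≠ 0
    rw [real_inner_self_eq_norm_sq]
    exact pow_ne_zero 2 (norm_ne_zero_iff.mpr hv₀)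
  · exact ⟨QbarBundle.trivHomeo ℓ.rep, fun z => rfl⟩
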